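/- Let f ∈ ℂ[X₀,X₁] be homogeneous of degree d ≥ 2 and squarefree. Then every homogeneous polynomial of degree ≥ 2d−3 in ℂ[X₀,X₁] lies in the Jacobian ideal J_f; equivalently, R_f^k = 0 for every k ≥ 2d−3. -/

import Mathlib

open MvPolynomial

/-- The Jacobian ideal of a binary form `f ∈ ℂ[X₀,X₁]`: the ideal generated by the two
partial derivatives of `f`. -/
noncomputable def jacIdeal (f : MvPolynomial (Fin 2) ℂ) : Ideal (MvPolynomial (Fin 2) ℂ) :=
  Ideal.span {pderiv 0 f, pderiv 1 f}

section Aux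
open Polynomial

noncomputable def phi2 : MvPolynomial (Fin 2) ℂ →ₐ[ℂ] Polynomial ℂ :=
  aeval ![Polynomial.X, 1]

lemma deg2 (s : Fin 2 →₀ ℕ) : s.degree = s 0 + s 1 := by
  rw [Finsupp.degree, ← Fin.sum_univ_two (fun i => s i)]
  exact (Finset.sum_subset (Finset.subset_univ _)
    (fun i _ hi => Finsupp.notMem_support_iff.mp hi))

lemma memdeg {n : ℕ} {f : MvPolynomial (Fin 2) ℂ} (hf : f.IsHomogeneous n)
    {s : Fin 2 →₀ ℕ} (hs : MvPolynomial.coeff s f ≠ 0) : s 0 + s 1 = n := by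
  rw [← deg2]
  by_contra h
  exact hs (hf.coeff_eq_zero h)

lemma phi2_monomial (s : Fin 2 →₀ ℕ) (c : ℂ) :
    phi2 (monomial s c) = Polynomial.C c * Polynomial.X ^ (s 0) := by
  rw [phi2, MvPolynomial.aeval_monomial, Finsupp.prod_fintype _ _ (fun i => pow_zero _)]
  simp [Fin.prod_univ_two, Polynomial.algebraMap_eq]

lemma phi2_apply (f : MvPolynomial (Fin 2) ℂ) :
    phi2 f = ∑ s ∈ f.support, Polynomial.C (MvPolynomial.coeff s f) * Polynomial.X ^ (s 0) := by
  conv_lhs => rw [← support_sum_monomial_coeff f]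
  rw [map_sum]
  exact Finset.sum_congr rfl fun s _ => phi2_monomial s _

lemma phi2_coeff {n : ℕ} {f : MvPolynomial (Fin 2) ℂ} (hf : f.IsHomogeneous n)
    {s : Fin 2 →₀ ℕ} (hs : s 0 + s 1 = n) :
    (phi2 f).coeff (s 0) = MvPolynomial.coeff s f := by
  rw [phi2_apply, Polynomial.finset_sum_coeff]
  by_cases hmem : s ∈ f.support
  · rw [Finset.sum_eq_single s]
    · simp [Polynomial.coeff_C_mul, Polynomial.coeff_X_pow]
    · intro t ht hts
      have htd : t 0 + t 1 = n := memdeg hf (MvPolynomial.mem_support_iff.mp ht)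
      have : s 0 ≠ t 0 := by
        intro h
        apply hts
        ext i
        match i with
        | 0 => omega
        | 1 => omega
      simp [Polynomial.coeff_C_mul, Polynomial.coeff_X_pow, this]
    · intro h; exact absurd hmem h
  · have hc : MvPolynomial.coeff s f = 0 := MvPolynomial.notMem_support_iff.mp hmem
    rw [hc]
    apply Finset.sum_eq_zero
    intro t ht
    have htd : t 0 + t 1 = n := memdeg hf (MvPolynomial.mem_support_iff.mp ht)
    have : s 0 ≠ t 0 := by
      intro h
      apply hmem
      have : s = t := by
        ext i
        match i with
        | 0 => omega
        | 1 => omega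
      rw [this]; exact ht
    simp [Polynomial.coeff_C_mul, Polynomial.coeff_X_pow, this]

lemma phi2_inj0 {n : ℕ} {f : MvPolynomial (Fin 2) ℂ} (hf : f.IsHomogeneous n)
    (h : phi2 f = 0) : f = 0 := by
  ext s
  by_cases hs : s 0 + s 1 = n
  · rw [← phi2_coeff hf hs, h]
    simp
  · rw [hf.coeff_eq_zero (by rw [deg2]; exact hs)]
    simp

lemma phi2_inj {n : ℕ} {f g : MvPolynomial (Fin 2) ℂ} (hf : f.IsHomogeneous n)
    (hg : g.IsHomogeneous n) (h : phi2 f = phi2 g) : f = g := by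
  have := phi2_inj0 (hf.sub hg) (by rw [map_sub, h, sub_self])
  linear_combination (norm := abel) this

lemma phi2_natDegree_le {n : ℕ} {f : MvPolynomial (Fin 2) ℂ} (hf : f.IsHomogeneous n) :
    (phi2 f).natDegree ≤ n := by
  rw [phi2_apply]
  apply Polynomial.natDegree_sum_le_of_forall_le
  intro s hs
  refine le_trans (Polynomial.natDegree_C_mul_le _ _) ?_
  refine le_trans (Polynomial.natDegree_X_pow_le _) ?_
  have := memdeg hf (MvPolynomial.mem_support_iff.mp hs)
  omega

noncomputable def homz (k : ℕ) (p : Polynomial ℂ) : MvPolynomial (Fin 2) ℂ :=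
  ∑ i ∈ Finset.range (k + 1),
    monomial (Finsupp.single 0 i + Finsupp.single 1 (k - i)) (p.coeff i)

lemma homz_isHomogeneous (k : ℕ) (p : Polynomial ℂ) : (homz k p).IsHomogeneous k := by
  apply IsHomogeneous.sum
  intro i hi
  apply isHomogeneous_monomial
  rw [deg2]
  have hik : i ≤ k := by simpa using Nat.lt_succ_iff.mp (Finset.mem_range.mp hi)
  simp [Finsupp.single_apply]
  omega

lemma phi2_homz {k : ℕ} {p : Polynomial ℂ} (hp : p.natDegree ≤ k) :
    phi2 (homz k p) = p := by
  rw [homz, map_sum]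
  have : ∀ i ∈ Finset.range (k + 1),
      phi2 (monomial (Finsupp.single 0 i + Finsupp.single 1 (k - i)) (p.coeff i))
        = Polynomial.C (p.coeff i) * Polynomial.X ^ i := by
    intro i _
    rw [phi2_monomial]
    simp [Finsupp.single_apply]
  rw [Finset.sum_congr rfl this]
  conv_rhs => rw [p.as_sum_range' (k + 1) (Nat.lt_succ_of_le hp)]
  exact Finset.sum_congr rfl fun i _ => by rw [Polynomial.C_mul_X_pow_eq_monomial]

lemma pderiv_isHomogeneous {n : ℕ} {f : MvPolynomial (Fin 2) ℂ} (hf : f.IsHomogeneous n)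
    (i : Fin 2) : (pderiv i f).IsHomogeneous (n - 1) := by
  conv_lhs => rw [← support_sum_monomial_coeff f]
  rw [map_sum]
  apply IsHomogeneous.sum
  intro s hs
  rw [pderiv_monomial]
  by_cases hsi : s i = 0
  · rw [hsi]
    simp only [Nat.cast_zero, mul_zero, map_zero]
    exact isHomogeneous_zero _ _ _
  · apply isHomogeneous_monomial
    have hd := memdeg hf (MvPolynomial.mem_support_iff.mp hs)
    rw [deg2, Finsupp.tsub_apply, Finsupp.tsub_apply]
    match i with
    | 0 =>
      simp only [Finsupp.single_apply] at hsi ⊢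
      norm_num
      omega
    | 1 =>
      simp only [Finsupp.single_apply] at hsi ⊢
      norm_num
      omega

lemma phi2_pderiv0 (f : MvPolynomial (Fin 2) ℂ) :
    phi2 (pderiv 0 f) = Polynomial.derivative (phi2 f) := by
  conv_lhs => rw [← support_sum_monomial_coeff f]
  conv_rhs => rw [← support_sum_monomial_coeff f]
  have h1 : pderiv (0 : Fin 2) (∑ s ∈ f.support, monomial s (MvPolynomial.coeff s f))
      = ∑ s ∈ f.support, pderiv (0 : Fin 2) (monomial s (MvPolynomial.coeff s f)) :=
    map_sum _ _ _
  rw [h1, map_sum, map_sum, map_sum]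
  refine Finset.sum_congr rfl fun s _ => ?_
  rw [pderiv_monomial, phi2_monomial, phi2_monomial, Polynomial.derivative_C_mul,
    Polynomial.derivative_X_pow]
  rw [Finsupp.tsub_apply]
  simp only [Finsupp.single_eq_same]
  rw [map_mul]
  ring

lemma phi2_pderiv1 {d : ℕ} {f : MvPolynomial (Fin 2) ℂ} (hf : f.IsHomogeneous d) :
    phi2 (pderiv 1 f) =
      Polynomial.C (d : ℂ) * phi2 f - Polynomial.X * Polynomial.derivative (phi2 f) := by
  rw [← phi2_pderiv0]
  conv_lhs => rw [← support_sum_monomial_coeff f]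
  conv_rhs => rw [← support_sum_monomial_coeff f]
  have h1 : ∀ (j : Fin 2), pderiv j (∑ s ∈ f.support, monomial s (MvPolynomial.coeff s f))
      = ∑ s ∈ f.support, pderiv j (monomial s (MvPolynomial.coeff s f)) :=
    fun j => map_sum _ _ _
  rw [h1, h1, map_sum, map_sum, map_sum, Finset.mul_sum, Finset.mul_sum, ← Finset.sum_sub_distrib]
  refine Finset.sum_congr rfl fun s hs => ?_
  have hd := memdeg hf (MvPolynomial.mem_support_iff.mp hs)
  rw [pderiv_monomial, pderiv_monomial, phi2_monomial, phi2_monomial, phi2_monomial,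
    Finsupp.tsub_apply, Finsupp.tsub_apply]
  simp only [Finsupp.single_apply, Finsupp.single_eq_same]
  norm_num
  by_cases h0 : s 0 = 0
  · have h1' : s 1 = d := by omega
    rw [h0, h1']
    norm_num
    ring
  · have hx : (Polynomial.X : Polynomial ℂ) * Polynomial.X ^ (s 0 - 1) = Polynomial.X ^ (s 0) := by
      rw [← pow_succ']
      congr 1
      omega
    have hcast : (MvPolynomial.coeff s f) * ((s 1 : ℂ))
        = (d : ℂ) * MvPolynomial.coeff s f - (MvPolynomial.coeff s f) * (s 0 : ℂ) := by
      have : (s 0 : ℂ) + (s 1 : ℂ) = (d : ℂ) := by exact_mod_cast congrArg Nat.cast hd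
      linear_combination (MvPolynomial.coeff s f) * this
    have hcx := congrArg Polynomial.C hcast
    rw [map_mul, map_sub, map_mul, map_mul] at hcx
    rw [← Polynomial.C_eq_natCast, ← Polynomial.C_eq_natCast, ← Polynomial.C_eq_natCast]
    linear_combination Polynomial.X ^ (s 0) * hcx
      + Polynomial.C (MvPolynomial.coeff s f) * Polynomial.C ((s 0 : ℂ)) * hx

lemma div_lemma {A B C : Polynomial ℂ} {m k : ℕ} (hcop : IsCoprime A B)
    (hA : A.natDegree ≤ m) (hBdeg : B.natDegree = m) (hB0 : B ≠ 0) (hm : 1 ≤ m)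
    (hk : 2 * m - 1 ≤ k) (hC : C.natDegree ≤ k) :
    ∃ U V : Polynomial ℂ, U.natDegree ≤ k - m ∧ V.natDegree ≤ k - m ∧ C = U * A + V * B := by
  obtain ⟨U₀, V₀, h1⟩ := hcop
  set B₁ := B * Polynomial.C (B.leadingCoeff)⁻¹ with hB₁
  have hmonic : B₁.Monic := Polynomial.monic_mul_leadingCoeff_inv hB0
  set Q := (C * U₀) /ₘ B₁ with hQ
  set U := (C * U₀) %ₘ B₁ with hU
  have hdiv : U + B₁ * Q = C * U₀ := Polynomial.modByMonic_add_div _ B₁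
  have hUdeg : U.natDegree ≤ m - 1 := by
    rcases eq_or_ne U 0 with h | h
    · simp [h]
    · have hlt : U.degree < B₁.degree := Polynomial.degree_modByMonic_lt _ hmonic
      rw [hB₁, Polynomial.degree_mul_leadingCoeff_inv _ hB0] at hlt
      have := Polynomial.natDegree_lt_natDegree h hlt
      omega
  refine ⟨U, Q * Polynomial.C (B.leadingCoeff)⁻¹ * A + C * V₀, ?_, ?_, ?_⟩
  · omega
  · set V := Q * Polynomial.C (B.leadingCoeff)⁻¹ * A + C * V₀ with hV
    have heq : V * B = C - U * A := by
      have : C = C * (U₀ * A + V₀ * B) := by rw [h1, mul_one]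
      calc V * B = (Q * Polynomial.C (B.leadingCoeff)⁻¹ * B) * A + C * V₀ * B := by ring
        _ = (B₁ * Q) * A + C * V₀ * B := by rw [hB₁]; ring
        _ = (C * U₀ - U) * A + C * V₀ * B := by rw [← hdiv]; ring
        _ = C * (U₀ * A + V₀ * B) - U * A := by ring
        _ = C - U * A := by rw [← this]
    rcases eq_or_ne V 0 with h | h
    · simp [h]
    · have hVB : (V * B).natDegree = V.natDegree + m := by
        rw [Polynomial.natDegree_mul h hB0, hBdeg]
      have hsub : (C - U * A).natDegree ≤ k := by
        apply le_trans (Polynomial.natDegree_sub_le _ _)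
        have : (U * A).natDegree ≤ m - 1 + m :=
          le_trans (Polynomial.natDegree_mul_le) (by omega)
        omega
      rw [heq] at hVB
      omega
  · have : C = C * (U₀ * A + V₀ * B) := by rw [h1, mul_one]
    calc C = C * (U₀ * A + V₀ * B) := this
      _ = (C * U₀) * A + C * V₀ * B := by ring
      _ = (U + B₁ * Q) * A + C * V₀ * B := by rw [hdiv]
      _ = U * A + ((Q * Polynomial.C (B.leadingCoeff)⁻¹) * B * A + C * V₀ * B) := by
          rw [hB₁]; ring
      _ = U * A + (Q * Polynomial.C (B.leadingCoeff)⁻¹ * A + C * V₀) * B := by ring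

lemma phi2_X0 : phi2 (MvPolynomial.X 0) = Polynomial.X := by
  rw [phi2, MvPolynomial.aeval_X]; rfl

lemma phi2_X1 : phi2 (MvPolynomial.X 1) = 1 := by
  rw [phi2, MvPolynomial.aeval_X]; rfl

lemma phi2_C (r : ℂ) : phi2 (MvPolynomial.C r) = Polynomial.C r := by
  rw [phi2, MvPolynomial.aeval_C, Polynomial.algebraMap_eq]

lemma coprime_derivs {d : ℕ} (hd : 2 ≤ d) {f : MvPolynomial (Fin 2) ℂ}
    (hf : f.IsHomogeneous d) (hsf : Squarefree f) :
    IsCoprime (phi2 (pderiv 0 f)) (phi2 (pderiv 1 f)) := by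
  classical
  by_contra hnc
  set F := phi2 f with hF
  have hA : phi2 (pderiv 0 f) = Polynomial.derivative F := phi2_pderiv0 f
  have hB : phi2 (pderiv 1 f) =
      Polynomial.C (d : ℂ) * F - Polynomial.X * Polynomial.derivative F := phi2_pderiv1 hf
  have hf0 : f ≠ 0 := hsf.ne_zero
  have hF0 : F ≠ 0 := fun h => hf0 (phi2_inj0 hf h)
  have hdC : (d : ℂ) ≠ 0 := Nat.cast_ne_zero.mpr (by omega)
  set g := EuclideanDomain.gcd (phi2 (pderiv 0 f)) (phi2 (pderiv 1 f)) with hg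
  have hgu : ¬ IsUnit g := fun h => hnc (EuclideanDomain.gcd_isUnit_iff.mp h)
  -- find a common root r
  have hg0 : g ≠ 0 := by
    intro h
    have h2 := EuclideanDomain.gcd_eq_zero_iff.mp (hg ▸ h)
    rw [hA] at h2; rw [hB] at h2
    have : Polynomial.C (d : ℂ) * F = 0 := by
      have := h2.2
      rw [h2.1] at this
      simpa using this
    rcases mul_eq_zero.mp this with h3 | h3
    · exact hdC (by simpa using h3)
    · exact hF0 h3
  obtain ⟨r, hr⟩ : ∃ r, g.IsRoot r :=
    Complex.exists_root (Polynomial.degree_pos_of_ne_zero_of_nonunit hg0 hgu)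
  have hAr : (Polynomial.derivative F).eval r = 0 := by
    rw [← hA]
    exact Polynomial.eval_eq_zero_of_dvd_of_eval_eq_zero (EuclideanDomain.gcd_dvd_left _ _) hr
  have hBr : F.eval r = 0 := by
    have h2 := Polynomial.eval_eq_zero_of_dvd_of_eval_eq_zero
      (EuclideanDomain.gcd_dvd_right (phi2 (pderiv 0 f)) (phi2 (pderiv 1 f))) hr
    rw [hB] at h2
    simp only [Polynomial.eval_sub, Polynomial.eval_mul, Polynomial.eval_C,
      Polynomial.eval_X, hAr, mul_zero, sub_zero] at h2
    rcases mul_eq_zero.mp h2 with h3 | h3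
    · exact absurd h3 hdC
    · exact h3
  -- (X - C r)^2 divides F
  obtain ⟨G, hG⟩ := (Polynomial.dvd_iff_isRoot.mpr hBr)
  have hGr : G.eval r = 0 := by
    have hder : Polynomial.derivative F =
        G + (Polynomial.X - Polynomial.C r) * Polynomial.derivative G := by
      rw [hG, Polynomial.derivative_mul]
      simp [Polynomial.derivative_sub]
    have := hAr
    rw [hder] at this
    simpa using this
  obtain ⟨H, hH⟩ := (Polynomial.dvd_iff_isRoot.mpr hGr)
  have hFH : F = (Polynomial.X - Polynomial.C r) ^ 2 * H := by
    rw [hG, hH]; ring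
  have hH0 : H ≠ 0 := by
    intro h; rw [h, mul_zero] at hFH; exact hF0 hFH
  have hHdeg : H.natDegree ≤ d - 2 := by
    have h1 : F.natDegree ≤ d := phi2_natDegree_le hf
    have h2 : F.natDegree = 2 + H.natDegree := by
      rw [hFH, Polynomial.natDegree_mul (pow_ne_zero 2 (Polynomial.X_sub_C_ne_zero r)) hH0]
      simp [Polynomial.natDegree_pow, Polynomial.natDegree_X_sub_C]
    omega
  set ℓ : MvPolynomial (Fin 2) ℂ := MvPolynomial.X 0 - MvPolynomial.C r * MvPolynomial.X 1
    with hℓdef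
  have hℓ : ℓ.IsHomogeneous 1 := (isHomogeneous_X _ _).sub (isHomogeneous_C_mul_X r 1)
  have hphiℓ : phi2 ℓ = Polynomial.X - Polynomial.C r := by
    rw [hℓdef, map_sub, map_mul, phi2_X0, phi2_X1, phi2_C, mul_one]
  have hfeq : f = ℓ ^ 2 * homz (d - 2) H := by
    have hhom : (ℓ ^ 2 * homz (d - 2) H).IsHomogeneous d := by
      have := (hℓ.pow 2).mul (homz_isHomogeneous (d - 2) H)
      have e : 1 * 2 + (d - 2) = d := by omega
      rwa [e] at this
    apply phi2_inj hf hhom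
    rw [map_mul, map_pow, hphiℓ, phi2_homz hHdeg, ← hF, hFH]
  have hunit : IsUnit ℓ := by
    apply hsf
    exact ⟨homz (d - 2) H, by rw [hfeq]; ring⟩
  have := hunit.map phi2
  rw [hphiℓ] at this
  have := Polynomial.isUnit_iff_degree_eq_zero.mp this
  rw [Polynomial.degree_X_sub_C] at this
  exact one_ne_zero this


lemma assemble {m k : ℕ} {a b P : MvPolynomial (Fin 2) ℂ} (ham : a.IsHomogeneous m)
    (hbm : b.IsHomogeneous m) (hPk : P.IsHomogeneous k) (hmk : m ≤ k)
    {U V : Polynomial ℂ} (hU : U.natDegree ≤ k - m) (hV : V.natDegree ≤ k - m)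
    (heq : phi2 P = U * phi2 a + V * phi2 b) :
    ∃ u v, u * a + v * b = P := by
  refine ⟨homz (k - m) U, homz (k - m) V, ?_⟩
  have hhom : (homz (k - m) U * a + homz (k - m) V * b).IsHomogeneous k := by
    have h1 := ((homz_isHomogeneous (k - m) U).mul ham).add
      ((homz_isHomogeneous (k - m) V).mul hbm)
    have e : (k - m) + m = k := by omega
    rwa [e] at h1
  apply phi2_inj hhom hPk
  rw [map_add, map_mul, map_mul, phi2_homz hU, phi2_homz hV, heq]

/-- If `f ∈ ℂ[X₀,X₁]` is homogeneous of degree `d ≥ 2` and squarefree, then every homogeneous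
polynomial of degree `≥ 2d−3` lies in the Jacobian ideal `J_f`; i.e. `R_f^k = 0` for
`k ≥ 2d−3`. -/
theorem stmt5 (d : ℕ) (hd : 2 ≤ d) (f : MvPolynomial (Fin 2) ℂ)
    (hf : f.IsHomogeneous d) (hsf : Squarefree f) :
    ∀ k : ℕ, 2 * d - 3 ≤ k → ∀ P : MvPolynomial (Fin 2) ℂ,
      P.IsHomogeneous k → P ∈ jacIdeal f := by
  intro k hk P hP
  classical
  set m := d - 1 with hm
  have hm1 : 1 ≤ m := by omega
  set F := phi2 f with hF
  have hf0 : f ≠ 0 := hsf.ne_zero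
  have hF0 : F ≠ 0 := fun h => hf0 (phi2_inj0 hf h)
  set a := pderiv (0 : Fin 2) f with ha
  set b := pderiv (1 : Fin 2) f with hb
  have haH : a.IsHomogeneous m := pderiv_isHomogeneous hf 0
  have hbH : b.IsHomogeneous m := pderiv_isHomogeneous hf 1
  set A := phi2 a with hA
  set B := phi2 b with hB
  have hcop : IsCoprime A B := coprime_derivs hd hf hsf
  have hAd : A.natDegree ≤ m := phi2_natDegree_le haH
  have hBd : B.natDegree ≤ m := phi2_natDegree_le hbH
  have hAeq : A = Polynomial.derivative F := phi2_pderiv0 f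
  have hBeq : B = Polynomial.C (d : ℂ) * F - Polynomial.X * Polynomial.derivative F :=
    phi2_pderiv1 hf
  have hFd : F.natDegree ≤ d := phi2_natDegree_le hf
  have hk' : 2 * m - 1 ≤ k := by omega
  have hmk : m ≤ k := by omega
  have hCk : (phi2 P).natDegree ≤ k := phi2_natDegree_le hP
  -- not both top coefficients of F vanish
  have hne : F.coeff d ≠ 0 ∨ F.coeff (d - 1) ≠ 0 := by
    by_contra h
    push_neg at h
    obtain ⟨h1, h2⟩ := h
    have hdeg2 : F.natDegree ≤ d - 2 := by
      rw [Polynomial.natDegree_le_iff_coeff_eq_zero]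
      intro j hj
      rcases lt_or_ge d j with h' | h'
      · exact Polynomial.coeff_eq_zero_of_natDegree_lt (lt_of_le_of_lt hFd h')
      · have : j = d - 1 ∨ j = d := by omega
        rcases this with h'' | h'' <;> rw [h'']
        · exact h2
        · exact h1
    have hfeq : f = MvPolynomial.X 1 ^ 2 * homz (d - 2) F := by
      have hhom : ((MvPolynomial.X (1 : Fin 2) : MvPolynomial (Fin 2) ℂ) ^ 2
          * homz (d - 2) F).IsHomogeneous d := by
        have h3 := ((isHomogeneous_X ℂ (1 : Fin 2)).pow 2).mul (homz_isHomogeneous (d - 2) F)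
        have e : 1 * 2 + (d - 2) = d := by omega
        rwa [e] at h3
      apply phi2_inj hf hhom
      rw [map_mul, map_pow, phi2_X1, phi2_homz hdeg2, one_pow, one_mul]
    have hunit := hsf (MvPolynomial.X 1) ⟨homz (d - 2) F, by rw [hfeq]; ring⟩
    have h4 := hunit.map (MvPolynomial.aeval (R := ℂ) (fun _ : Fin 2 => (0 : ℂ)))
    rw [MvPolynomial.aeval_X] at h4
    simp at h4
  -- coefficient computations
  have hcA : A.coeff m = F.coeff d * (d : ℂ) := by
    rw [hAeq, Polynomial.coeff_derivative]
    have e : m + 1 = d := by omega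
    rw [e]
    congr 1
    have : ((m : ℂ) + 1) = (d : ℂ) := by
      have : (m : ℕ) + 1 = d := by omega
      exact_mod_cast congrArg (Nat.cast : ℕ → ℂ) this
    rw [this]
  have hcB : B.coeff m = F.coeff (d - 1) := by
    rw [hBeq, Polynomial.coeff_sub, Polynomial.coeff_C_mul]
    have e1 : m = (m - 1) + 1 := by omega
    rw [e1, Polynomial.coeff_X_mul, Polynomial.coeff_derivative, ← e1]
    have hm' : F.coeff (d - 1) = F.coeff m := by rw [hm]
    rw [hm']
    have hcast : ((m - 1 : ℕ) : ℂ) + 1 = (d : ℂ) - 1 := by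
      have h5 : (m - 1) + 2 = d := by omega
      have h6 := congrArg (Nat.cast : ℕ → ℂ) h5
      push_cast at h6
      linear_combination h6
    rw [hcast]
    ring
  rw [jacIdeal, Ideal.mem_span_pair]
  rcases hne with hc | hc
  · -- A has exact degree m
    have hA0 : A ≠ 0 := fun h => by
      rw [h, Polynomial.coeff_zero] at hcA
      exact hc (by
        have := hcA.symm
        rcases mul_eq_zero.mp this with h' | h'
        · exact h'
        · exact absurd h' (Nat.cast_ne_zero.mpr (by omega)))
    have hAdeg : A.natDegree = m := le_antisymm hAd (Polynomial.le_natDegree_of_ne_zero (by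
      rw [hcA]
      exact mul_ne_zero hc (Nat.cast_ne_zero.mpr (by omega))))
    obtain ⟨U, V, hU, hV, heq⟩ := div_lemma hcop.symm hBd hAdeg hA0 hm1 hk' hCk
    obtain ⟨u, v, huv⟩ := assemble haH hbH hP hmk hV hU
      (by rw [heq]; ring)
    exact ⟨u, v, huv⟩
  · -- B has exact degree m
    have hB0 : B ≠ 0 := fun h => by
      rw [h, Polynomial.coeff_zero] at hcB
      exact hc hcB.symm
    have hBdeg : B.natDegree = m := le_antisymm hBd (Polynomial.le_natDegree_of_ne_zero (by
      rw [hcB]; exact hc))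
    obtain ⟨U, V, hU, hV, heq⟩ := div_lemma hcop hAd hBdeg hB0 hm1 hk' hCk
    obtain ⟨u, v, huv⟩ := assemble haH hbH hP hmk hU hV heq
    exact ⟨u, v, huv⟩

end Aux
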